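/- Let p be a walk in an undirected graph G visiting a set S of vertices, and suppose p traverses some edge {i,j} in the direction from i to j more than once. Then there exists a walk p' in G with the same endpoints, visiting the same set S of vertices, whose multiset of traversed edges is the multiset of edges of p with two copies of {i,j} removed. -/

import Mathlib

open SimpleGraph

/-- The total weight of a walk: sum of edge weights with multiplicity. -/
def walkWeight {V : Type*} {G : SimpleGraph V} (w : V → V → ℝ) {u v : V}
    (p : G.Walk u v) : ℝ :=
  (p.darts.map (fun d => w d.fst d.snd)).sum

lemma split_at_dart {V : Type*} [DecidableEq V] {G : SimpleGraph V} {a b : V}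
    (p : G.Walk a b) (i j : V) {n : ℕ}
    (h : n + 1 ≤ p.darts.countP (fun d => decide (d.fst = i ∧ d.snd = j))) :
    ∃ (hij : G.Adj i j) (y : G.Walk a i) (z : G.Walk j b),
      p = y.append (Walk.cons hij z) ∧
      n ≤ z.darts.countP (fun d => decide (d.fst = i ∧ d.snd = j)) := by
  induction p with
  | nil => simp at h
  | @cons a c b h' q ih =>
    by_cases hc : a = i ∧ c = j
    · obtain ⟨rfl, rfl⟩ := hc
      rw [Walk.darts_cons, List.countP_cons_of_pos (by simp)] at h
      exact ⟨h', Walk.nil, q, by simp, Nat.le_of_succ_le_succ h⟩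
    · rw [Walk.darts_cons, List.countP_cons_of_neg (by simpa using hc)] at h
      obtain ⟨hij, y, z, rfl, hz⟩ := ih h
      exact ⟨hij, Walk.cons h' y, z, by simp, hz⟩

theorem stmt16 {V : Type*} [DecidableEq V] {G : SimpleGraph V} {u v : V}
    (p : G.Walk u v) (i j : V)
    (h2 : 2 ≤ p.darts.countP (fun d => decide (d.fst = i ∧ d.snd = j))) :
    ∃ p' : G.Walk u v, {x | x ∈ p'.support} = {x | x ∈ p.support} ∧
      (p'.edges : Multiset (Sym2 V)) + {s(i, j), s(i, j)} =
        (p.edges : Multiset (Sym2 V)) := by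
  obtain ⟨hij, y1, z1, rfl, h1⟩ := split_at_dart p i j (n := 1) h2
  obtain ⟨hij', y2, z2, rfl, -⟩ := split_at_dart z1 i j (n := 0) h1
  refine ⟨y1.append (y2.reverse.append z2), ?_, ?_⟩
  · have hi : i ∈ y2.support := Walk.end_mem_support y2
    have hj : j ∈ y2.support := Walk.start_mem_support y2
    ext x
    simp [Walk.mem_support_append_iff, Walk.support_reverse]
    constructor
    · rintro (hx | hx | hx) <;> tauto
    · rintro (hx | rfl | hx | rfl | hx) <;> tauto
  · simp only [Walk.edges_append, Walk.edges_cons, Walk.edges_reverse,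
      ← Multiset.coe_add, ← Multiset.cons_coe, Multiset.coe_reverse,
      ← Multiset.singleton_add]
    abel
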